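/- For any bounded operators T, S on a Banach space, (sinh(ad T)/ad T)(S) = ∫₀¹ e^{(2s−1)T} S e^{(1−2s)T} ds, where sinh(λ)/λ is interpreted via its everywhere-convergent power series applied to ad T = [T, ·]. -/

import Mathlib

open NormedSpace


open NormedSpace ContinuousLinearMap MeasureTheory

section aux

set_option linter.unusedSectionVars false
set_option synthInstance.maxHeartbeats 400000

lemma expApply {E : Type*} [NormedAddCommGroup E] [NormedSpace ℝ E] [CompleteSpace E]
    (M : E →L[ℝ] E) (v : E) :
    exp M v = ∑' n : ℕ, ((n.factorial : ℝ)⁻¹) • ((M ^ n) v) := by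
  rw [exp_eq_tsum ℝ]
  have h := (ContinuousLinearMap.apply ℝ E v).map_tsum
    (expSeries_summable' (𝕂 := ℝ) M)
  simpa using h

variable {𝔸 : Type*} [NormedRing 𝔸] [NormedAlgebra ℝ 𝔸] [CompleteSpace 𝔸]

lemma mulpow (T U : 𝔸) (n : ℕ) : ((mul ℝ 𝔸 T) ^ n) U = T ^ n * U := by
  induction n with
  | zero => simp
  | succ n ih => rw [pow_succ', pow_succ', mul_apply_eq_comp, ih, mul_apply', mul_assoc]

lemma mulpowR (T U : 𝔸) (n : ℕ) : (((mul ℝ 𝔸).flip T) ^ n) U = U * T ^ n := by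
  induction n with
  | zero => simp
  | succ n ih => rw [pow_succ', pow_succ, mul_apply_eq_comp, ih, flip_apply, mul_apply', mul_assoc]

lemma expMulLeft (b : ℝ) (T U : 𝔸) :
    exp (b • (mul ℝ 𝔸 T)) U = exp (b • T) * U := by
  rw [expApply]
  simp only [exp_eq_tsum ℝ]
  rw [← Summable.tsum_mul_right U (expSeries_summable' (𝕂 := ℝ) (b • T))]
  refine tsum_congr fun n => ?_
  simp only [smul_pow, ContinuousLinearMap.smul_apply, mulpow, smul_mul_assoc]

lemma expMulRight (b : ℝ) (T U : 𝔸) :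
    exp (b • ((mul ℝ 𝔸).flip T)) U = U * exp (b • T) := by
  rw [expApply]
  simp only [exp_eq_tsum ℝ]
  rw [← Summable.tsum_mul_left U (expSeries_summable' (𝕂 := ℝ) (b • T))]
  refine tsum_congr fun n => ?_
  simp only [smul_pow, ContinuousLinearMap.smul_apply, mulpowR, mul_smul_comm]

lemma conjExp (a : ℝ) (T S : 𝔸) :
    exp (a • (mul ℝ 𝔸 T - (mul ℝ 𝔸).flip T)) S
      = exp (a • T) * S * exp (-a • T) := by
  have hc : Commute (a • (mul ℝ 𝔸 T)) ((-a) • ((mul ℝ 𝔸).flip T)) := by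
    show _ * _ = _ * _
    ext U
    simp [mul_apply_eq_comp, mul_assoc, smul_smul, mul_comm]
  have h2 : a • (mul ℝ 𝔸 T - (mul ℝ 𝔸).flip T)
      = a • (mul ℝ 𝔸 T) + (-a) • ((mul ℝ 𝔸).flip T) := by
    rw [smul_sub, neg_smul, ← sub_eq_add_neg]
  let +nondep : NormedAlgebra ℚ (𝔸 →L[ℝ] 𝔸) := .restrictScalars ℚ ℝ (𝔸 →L[ℝ] 𝔸)
  rw [h2, exp_add_of_commute hc, mul_apply_eq_comp, expMulRight, expMulLeft, mul_assoc]

end aux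

lemma intPow (n : ℕ) :
    ∫ u in (0:ℝ)..1, (2*u-1)^n = (1 - (-1:ℝ)^(n+1))/(2*((n:ℝ)+1)) := by
  have h := intervalIntegral.integral_comp_mul_add (a := (0:ℝ)) (b := 1)
      (f := fun y : ℝ => y ^ n) (c := 2) two_ne_zero (-1)
  have h2 : ∀ u : ℝ, 2*u + (-1) = 2*u - 1 := fun u => by ring
  simp only [h2] at h
  rw [h, integral_pow]
  have hn : (n:ℝ) + 1 ≠ 0 := by positivity
  norm_num
  field_simp

set_option maxSynthPendingDepth 3 in
set_option synthInstance.maxHeartbeats 1000000 in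
set_option maxHeartbeats 2000000 in
open NormedSpace ContinuousLinearMap MeasureTheory in
/-- For bounded operators `T, S` on a Banach space,
`(sinh(ad T)/ad T)(S) = ∫₀¹ e^{(2s−1)T} S e^{(1−2s)T} ds`, where
`sinh(λ)/λ = Σ λ^{2n}/(2n+1)!` is applied to `ad T = [T, ·]`. -/
theorem stmt13 (X : Type*) [NormedAddCommGroup X] [NormedSpace ℝ X] [CompleteSpace X]
    (T S : X →L[ℝ] X)
    (adT : (X →L[ℝ] X) → (X →L[ℝ] X))
    (hadT : ∀ U : X →L[ℝ] X, adT U = T ∘L U - U ∘L T) :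
    (∑' n : ℕ, ((Nat.factorial (2 * n + 1) : ℝ)⁻¹) • adT^[2 * n] S)
      = ∫ u in (0 : ℝ)..1,
          exp ((2 * u - 1) • T) ∘L S ∘L exp ((1 - 2 * u) • T) := by
  set D : (X →L[ℝ] X) →L[ℝ] (X →L[ℝ] X) :=
    ContinuousLinearMap.mul ℝ (X →L[ℝ] X) T
      - (ContinuousLinearMap.mul ℝ (X →L[ℝ] X)).flip T with hD
  have hadD : adT = ⇑D := by
    funext U
    rw [hadT, hD]
    rfl
  have hiter : ∀ k : ℕ, adT^[k] S = (D ^ k) S := by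
    intro k
    rw [hadD, ← FunLike.coe_pow_eq_iterate]
  set In : ℕ → ℝ := fun n => ∫ u in (0:ℝ)..1, (2*u-1)^n with hIn
  have hInval : ∀ n, In n = (1 - (-1:ℝ)^(n+1))/(2*((n:ℝ)+1)) := fun n => intPow n
  have habs : ∀ x ∈ Set.Ioc (0:ℝ) 1, |2*x-1| ≤ 1 := by
    intro x hx
    rw [abs_le]
    constructor <;> [linarith [hx.1]; linarith [hx.2]]
  have hInabs : ∀ n, |In n| ≤ 1 := by
    intro n
    have h := intervalIntegral.norm_integral_le_of_norm_le_const
      (a := (0:ℝ)) (b := 1) (C := 1) (f := fun u => (2*u-1)^n) ?_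
    · simpa using h
    · intro x hx
      rw [Set.uIoc_of_le zero_le_one] at hx
      rw [Real.norm_eq_abs, abs_pow]
      exact pow_le_one₀ (abs_nonneg _) (habs x hx)
  set g : ℕ → (X →L[ℝ] X) :=
    fun n => (((n.factorial : ℝ))⁻¹ * In n) • ((D ^ n) S) with hg
  have hDn : ∀ n, ‖(D ^ n) S‖ ≤ ‖D‖ ^ n * ‖S‖ := by
    intro n
    induction n with
    | zero => simp
    | succ n ih =>
      rw [pow_succ', ContinuousLinearMap.mul_apply]
      calc ‖D ((D ^ n) S)‖ ≤ ‖D‖ * ‖(D ^ n) S‖ := D.le_opNorm _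
        _ ≤ ‖D‖ * (‖D‖ ^ n * ‖S‖) :=
            mul_le_mul_of_nonneg_left ih (norm_nonneg D)
        _ = ‖D‖ ^ (n+1) * ‖S‖ := by ring
  have hCsum : Summable (fun n : ℕ => ((n.factorial : ℝ))⁻¹ * (‖D‖ ^ n * ‖S‖)) := by
    refine ((Real.summable_pow_div_factorial ‖D‖).mul_right ‖S‖).congr fun n => ?_
    rw [div_eq_mul_inv]
    ring
  have hgnorm : ∀ n, ‖g n‖ ≤ ((n.factorial : ℝ))⁻¹ * (‖D‖ ^ n * ‖S‖) := by
    intro n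
    simp only [hg]
    simp only [norm_smul, Real.norm_eq_abs, abs_mul]
    rw [abs_of_nonneg (inv_nonneg.2 (Nat.cast_nonneg (α := ℝ) _))]
    calc ((n.factorial : ℝ))⁻¹ * |In n| * ‖(D ^ n) S‖
        ≤ ((n.factorial : ℝ))⁻¹ * 1 * (‖D‖ ^ n * ‖S‖) := by
          apply mul_le_mul
          · exact mul_le_mul_of_nonneg_left (hInabs n) (by positivity)
          · exact hDn n
          · exact norm_nonneg _
          · positivity
      _ = ((n.factorial : ℝ))⁻¹ * (‖D‖ ^ n * ‖S‖) := by ring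
  have hgsum : Summable g := Summable.of_norm_bounded hCsum hgnorm
  -- the integrand expanded as a series
  have hconj : ∀ u : ℝ,
      (exp ((2*u-1) • T) ∘L S ∘L exp ((1-2*u) • T))
        = ∑' n : ℕ, (((n.factorial : ℝ))⁻¹ * (2*u-1)^n) • ((D ^ n) S) := by
    intro u
    have h1 := conjExp (𝔸 := X →L[ℝ] X) (2*u-1) T S
    rw [← hD] at h1
    have h2 : (1-2*u) = -(2*u-1) := by ring
    rw [h2]
    show exp ((2*u-1) • T) * S * exp (-(2*u-1) • T) = _
    rw [← h1, expApply]
    refine tsum_congr fun n => ?_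
    rw [smul_pow, ContinuousLinearMap.smul_apply, smul_smul]
  have hint : ∀ n : ℕ, Integrable
      (fun u : ℝ => (((n.factorial : ℝ))⁻¹ * (2*u-1)^n) • ((D ^ n) S))
      (volume.restrict (Set.Ioc 0 1)) := by
    intro n
    have hc : Continuous fun u : ℝ =>
        (((n.factorial : ℝ))⁻¹ * (2*u-1)^n) • ((D ^ n) S) := by
      fun_prop
    exact hc.integrableOn_Ioc
  have hbound : ∀ n : ℕ, ∀ x ∈ Set.Ioc (0:ℝ) 1,
      ‖(((n.factorial : ℝ))⁻¹ * (2*x-1)^n) • ((D ^ n) S)‖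
        ≤ ((n.factorial : ℝ))⁻¹ * (‖D‖ ^ n * ‖S‖) := by
    intro n x hx
    simp only [norm_smul, Real.norm_eq_abs, abs_mul, abs_pow]
    rw [abs_of_nonneg (inv_nonneg.2 (Nat.cast_nonneg (α := ℝ) _))]
    calc ((n.factorial : ℝ))⁻¹ * |2*x-1| ^ n * ‖(D ^ n) S‖
        ≤ ((n.factorial : ℝ))⁻¹ * 1 * (‖D‖ ^ n * ‖S‖) := by
          apply mul_le_mul
          · exact mul_le_mul_of_nonneg_left
              (pow_le_one₀ (abs_nonneg _) (habs x hx)) (by positivity)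
          · exact hDn n
          · exact norm_nonneg _
          · positivity
      _ = ((n.factorial : ℝ))⁻¹ * (‖D‖ ^ n * ‖S‖) := by ring
  have hnorm : Summable fun n : ℕ =>
      ∫ u in Set.Ioc (0:ℝ) 1,
        ‖(((n.factorial : ℝ))⁻¹ * (2*u-1)^n) • ((D ^ n) S)‖ := by
    refine Summable.of_nonneg_of_le
      (fun n => integral_nonneg fun u => norm_nonneg _) (fun n => ?_) hCsum
    calc (∫ u in Set.Ioc (0:ℝ) 1,
          ‖(((n.factorial : ℝ))⁻¹ * (2*u-1)^n) • ((D ^ n) S)‖)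
        ≤ ∫ _ in Set.Ioc (0:ℝ) 1, ((n.factorial : ℝ))⁻¹ * (‖D‖ ^ n * ‖S‖) := by
          refine setIntegral_mono_on (hint n).norm ?_ measurableSet_Ioc
            (hbound n)
          exact integrableOn_const measure_Ioc_lt_top.ne
      _ = ((n.factorial : ℝ))⁻¹ * (‖D‖ ^ n * ‖S‖) := by
          simp [Real.volume_Ioc]
  have hterm : ∀ n : ℕ,
      (∫ u in Set.Ioc (0:ℝ) 1,
        (((n.factorial : ℝ))⁻¹ * (2*u-1)^n) • ((D ^ n) S)) = g n := by
    intro n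
    rw [integral_smul_const, integral_const_mul]
    simp only [hg]
    congr 2
    simp only [hIn]
    exact (intervalIntegral.integral_of_le zero_le_one).symm
  have key : (∫ u in (0:ℝ)..1,
      exp ((2*u-1) • T) ∘L S ∘L exp ((1-2*u) • T)) = ∑' n, g n := by
    rw [intervalIntegral.integral_of_le zero_le_one]
    simp only [hconj]
    rw [← MeasureTheory.integral_tsum_of_summable_integral_norm hint hnorm]
    exact tsum_congr hterm
  rw [key]
  have hodd : ∀ k : ℕ, g (2*k+1) = 0 := by
    intro k
    have h1 : In (2*k+1) = 0 := by
      rw [hInval]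
      have : (-1:ℝ) ^ (2*k+1+1) = 1 := Even.neg_one_pow ⟨k+1, by ring⟩
      rw [this]
      norm_num
    rw [hg]
    simp [h1]
  have heven : ∀ k : ℕ,
      ((Nat.factorial (2 * k + 1) : ℝ)⁻¹) • adT^[2 * k] S = g (2*k) := by
    intro k
    rw [hiter]
    simp only [hg]
    congr 1
    have h1 : In (2*k) = (((2*k : ℕ) : ℝ) + 1)⁻¹ := by
      rw [hInval]
      have : (-1:ℝ) ^ (2*k+1) = -1 := Odd.neg_one_pow ⟨k, by ring⟩
      rw [this]
      rw [inv_eq_one_div, div_eq_div_iff (by positivity) (by positivity)]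
      ring
    rw [h1, Nat.factorial_succ]
    have h3 : ((2*k).factorial : ℝ) ≠ 0 := by
      exact_mod_cast Nat.cast_ne_zero.2 (Nat.factorial_ne_zero _)
    have h4 : ((2*k : ℕ) : ℝ) + 1 ≠ 0 := by positivity
    push_cast
    field_simp
  have he : Summable fun k : ℕ => g (2*k) :=
    hgsum.comp_injective fun a b h => by omega
  have ho : Summable fun k : ℕ => g (2*k+1) :=
    hgsum.comp_injective fun a b h => by omega
  rw [← tsum_even_add_odd he ho]
  have hzero : (∑' k : ℕ, g (2*k+1)) = 0 := by
    simp [hodd]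
  rw [hzero, add_zero]
  exact tsum_congr heven
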